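/- Let ψ ≥ 0 be a convex function on [0,b) with 0 < b ≤ ∞ and ψ(0) = 0, and let ψ*(t) = sup_{λ∈(0,b)} (λt − ψ(λ)) and ψ*⁻¹(y) = inf{t ≥ 0 : ψ*(t) > y}. If Z₁,…,Zₙ are real random variables with ln E[e^{λ Zᵢ}] ≤ ψ(λ) for all λ ∈ [0,b) and all i, then E[maxᵢ Zᵢ] ≤ ψ*⁻¹(ln n). -/

import Mathlib

open MeasureTheory Real Set ENNReal

/-- The convex conjugate `ψ*(t) = sup_{λ ∈ (0,b)} (λt - ψ(λ))`, as an extended real. -/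
noncomputable def psiStar (b : ℝ≥0∞) (ψ : ℝ → ℝ) (t : ℝ) : EReal :=
  ⨆ (l : ℝ) (_ : 0 < l) (_ : ENNReal.ofReal l < b), ((l * t - ψ l : ℝ) : EReal)

/-- The generalized inverse `ψ*⁻¹(y) = inf {t ≥ 0 : ψ*(t) > y}`. -/
noncomputable def psiStarInv (b : ℝ≥0∞) (ψ : ℝ → ℝ) (y : ℝ) : ℝ :=
  sInf {t : ℝ | 0 ≤ t ∧ (y : EReal) < psiStar b ψ t}

/-- Maximal inequality: if `ψ ≥ 0` is convex on `[0,b)` (`0 < b ≤ ∞`) with `ψ(0) = 0`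
and `ln E[e^{λ Zᵢ}] ≤ ψ(λ)` for all `λ ∈ [0,b)` and all `i`, then
`E[maxᵢ Zᵢ] ≤ ψ*⁻¹(ln n)`. -/
theorem stmt0 {Ω : Type*} [MeasurableSpace Ω] (μ : Measure Ω) [IsProbabilityMeasure μ]
    (n : ℕ) (hn : 0 < n) (Z : Fin n → Ω → ℝ)
    (hZm : ∀ i, Measurable (Z i)) (hZint : ∀ i, Integrable (Z i) μ)
    (b : ℝ≥0∞) (hb : 0 < b) (ψ : ℝ → ℝ) (hψ0 : ψ 0 = 0)
    (hψnn : ∀ x : ℝ, 0 ≤ x → ENNReal.ofReal x < b → 0 ≤ ψ x)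
    (hψconv : ConvexOn ℝ {x : ℝ | 0 ≤ x ∧ ENNReal.ofReal x < b} ψ)
    (hmgf : ∀ i, ∀ l : ℝ, 0 ≤ l → ENNReal.ofReal l < b →
      Integrable (fun ω => Real.exp (l * Z i ω)) μ ∧
      Real.log (∫ ω, Real.exp (l * Z i ω) ∂μ) ≤ ψ l) :
    ∫ ω, (Finset.univ.sup' (Finset.univ_nonempty_iff.mpr (Fin.pos_iff_nonempty.mp hn))
        fun i => Z i ω) ∂μ ≤ psiStarInv b ψ (Real.log n) := by
  have hne : (Finset.univ : Finset (Fin n)).Nonempty :=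
    Finset.univ_nonempty_iff.mpr (Fin.pos_iff_nonempty.mp hn)
  set f : Ω → ℝ := fun ω => Finset.univ.sup' hne fun i => Z i ω with hf
  have hfm : Measurable f := by
    have : f = Finset.univ.sup' hne Z := by
      funext ω; rw [Finset.sup'_apply]
    rw [this]
    exact Finset.measurable_sup' hne fun i _ => hZm i
  -- f ω equals some Z j ω
  have hfle : ∀ ω, ∃ j, f ω = Z j ω := by
    intro ω
    obtain ⟨j, _, hj⟩ := Finset.exists_mem_eq_sup' hne fun i => Z i ω
    exact ⟨j, hj⟩
  have hfint : Integrable f μ := by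
    refine Integrable.mono' (g := fun ω => ∑ i, |Z i ω|)
      (integrable_finset_sum _ fun i _ => (hZint i).abs) hfm.aestronglyMeasurable ?_
    filter_upwards with ω
    obtain ⟨j, hj⟩ := hfle ω
    rw [Real.norm_eq_abs, hj]
    exact Finset.single_le_sum (f := fun i => |Z i ω|) (fun i _ => abs_nonneg _)
      (Finset.mem_univ j)
  set M : ℝ := ∫ ω, f ω ∂μ with hM
  -- key bound
  have key : ∀ l : ℝ, 0 < l → ENNReal.ofReal l < b → l * M - ψ l ≤ Real.log n := by
    intro l hl hlb
    have hexpint : ∀ i, Integrable (fun ω => Real.exp (l * Z i ω)) μ :=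
      fun i => (hmgf i l hl.le hlb).1
    have hgint : Integrable (fun ω => Real.exp (l * f ω)) μ := by
      refine Integrable.mono' (g := fun ω => ∑ i, Real.exp (l * Z i ω))
        (integrable_finset_sum _ fun i _ => hexpint i)
        ((hfm.const_mul l).exp.aestronglyMeasurable) ?_
      filter_upwards with ω
      obtain ⟨j, hj⟩ := hfle ω
      rw [Real.norm_eq_abs, abs_of_nonneg (Real.exp_nonneg _), hj]
      exact Finset.single_le_sum (f := fun i => Real.exp (l * Z i ω))
        (fun i _ => Real.exp_nonneg _) (Finset.mem_univ j)
    -- Jensen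
    have hjensen : Real.exp (l * M) ≤ ∫ ω, Real.exp (l * f ω) ∂μ := by
      have hconv : ConvexOn ℝ Set.univ (fun x : ℝ => Real.exp (l * x)) :=
        (convexOn_exp.comp_affineMap (AffineMap.lineMap 0 l)).subset
          (by intro x _; trivial) convex_univ |>.congr ?_
      · have := hconv.map_integral_le (f := f) (μ := μ)
          (Real.continuous_exp.comp (continuous_const.mul continuous_id)).continuousOn
          isClosed_univ (Filter.Eventually.of_forall fun _ => trivial) hfint
          (by exact hgint)
        simpa using this
      · intro x _
        simp [AffineMap.lineMap_apply]
        ring_nf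
    -- sum bound
    have hsum : ∫ ω, Real.exp (l * f ω) ∂μ ≤ n * Real.exp (ψ l) := by
      have h1 : ∫ ω, Real.exp (l * f ω) ∂μ ≤ ∫ ω, ∑ i, Real.exp (l * Z i ω) ∂μ := by
        refine integral_mono hgint (integrable_finset_sum _ fun i _ => hexpint i) ?_
        intro ω
        obtain ⟨j, hj⟩ := hfle ω
        simp only [hj]
        exact Finset.single_le_sum (f := fun i => Real.exp (l * Z i ω))
          (fun i _ => Real.exp_nonneg _) (Finset.mem_univ j)
      have h2 : ∫ ω, ∑ i, Real.exp (l * Z i ω) ∂μ = ∑ i, ∫ ω, Real.exp (l * Z i ω) ∂μ :=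
        integral_finset_sum _ fun i _ => hexpint i
      have h3 : ∀ i : Fin n, ∫ ω, Real.exp (l * Z i ω) ∂μ ≤ Real.exp (ψ l) := by
        intro i
        have hpos : 0 < ∫ ω, Real.exp (l * Z i ω) ∂μ := integral_exp_pos (hexpint i)
        have := (hmgf i l hl.le hlb).2
        rwa [Real.log_le_iff_le_exp hpos] at this
      calc ∫ ω, Real.exp (l * f ω) ∂μ ≤ ∑ i : Fin n, ∫ ω, Real.exp (l * Z i ω) ∂μ := by
            rw [← h2]; exact h1
        _ ≤ ∑ _i : Fin n, Real.exp (ψ l) := Finset.sum_le_sum fun i _ => h3 i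
        _ = n * Real.exp (ψ l) := by simp [Finset.sum_const, nsmul_eq_mul]
    have hnpos : (0 : ℝ) < n := Nat.cast_pos.mpr hn
    have : Real.exp (l * M) ≤ n * Real.exp (ψ l) := hjensen.trans hsum
    have hlog : l * M ≤ Real.log n + ψ l := by
      have := Real.log_le_log (Real.exp_pos _) this
      rwa [Real.log_exp, Real.log_mul hnpos.ne' (Real.exp_pos _).ne', Real.log_exp] at this
    linarith
  -- pick a valid l₀
  obtain ⟨c, hc0, hcb⟩ := exists_between hb
  have hcne : c ≠ ⊤ := (hcb.trans_le le_top).ne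
  set l₀ : ℝ := c.toReal with hl₀
  have hl₀pos : 0 < l₀ := ENNReal.toReal_pos hc0.ne' hcne
  have hl₀b : ENNReal.ofReal l₀ < b := by rwa [hl₀, ENNReal.ofReal_toReal hcne]
  -- set S nonempty
  set S : Set ℝ := {t : ℝ | 0 ≤ t ∧ ((Real.log n : ℝ) : EReal) < psiStar b ψ t} with hS
  have hmem : ∀ t : ℝ, 0 ≤ t → Real.log n < l₀ * t - ψ l₀ → t ∈ S := by
    intro t ht hlt
    refine ⟨ht, lt_of_lt_of_le (EReal.coe_lt_coe_iff.mpr hlt) ?_⟩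
    exact le_iSup_of_le l₀ (le_iSup_of_le hl₀pos (le_iSup_of_le hl₀b le_rfl))
  have hSne : S.Nonempty := by
    refine ⟨max 0 ((Real.log n + ψ l₀ + 1) / l₀), hmem _ (le_max_left _ _) ?_⟩
    have h1 : l₀ * ((Real.log n + ψ l₀ + 1) / l₀) = Real.log n + ψ l₀ + 1 := by
      field_simp
    have h2 : l₀ * ((Real.log n + ψ l₀ + 1) / l₀) ≤ l₀ * max 0 ((Real.log n + ψ l₀ + 1) / l₀) :=
      mul_le_mul_of_nonneg_left (le_max_right _ _) hl₀pos.le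
    linarith
  -- M is a lower bound of S
  refine le_csInf hSne ?_
  intro s hs
  obtain ⟨hs0, hslt⟩ := hs
  by_contra hMs
  push_neg at hMs
  -- extract witness from the sup
  rw [psiStar] at hslt
  obtain ⟨l, hl⟩ := lt_iSup_iff.mp hslt
  obtain ⟨hlpos, hl⟩ := lt_iSup_iff.mp hl
  obtain ⟨hlb, hl⟩ := lt_iSup_iff.mp hl
  have hl' : Real.log n < l * s - ψ l := EReal.coe_lt_coe_iff.mp hl
  have hkey := key l hlpos hlb
  have : l * M < l * s := by linarith
  have := lt_of_mul_lt_mul_left this hlpos.le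
  exact absurd this (not_lt.mpr hMs.le)
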